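/- Let n ≥ 1 and let Ω ⊆ 𝕆_sⁿ be a real-connected slice-domain with Ω ∩ ℝⁿ ≠ ∅. Then for every q ∈ Ω and every x ∈ Ω ∩ ℝⁿ there exist I ∈ 𝕊 and a continuous path γ : [0,1] → Ω ∩ ℂ_Iⁿ (continuous with respect to the Euclidean topology of ℂ_Iⁿ) with γ(0) = q and γ(1) = x. -/

import Mathlib

/-! Octonions via the Cayley–Dickson construction on the quaternions,
the n-dimensional quadratic cone, the slice topology, and slice regularity. -/

noncomputable section
open Quaternion Topology

/-- The octonions, as `ℍ × ℍ` with the (L²) Euclidean norm and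
Cayley–Dickson multiplication. -/
abbrev Oct : Type := WithLp 2 (ℍ × ℍ)

namespace Oct

def c1 (p : Oct) : ℍ := (WithLp.equiv 2 (ℍ × ℍ) p).1
def c2 (p : Oct) : ℍ := (WithLp.equiv 2 (ℍ × ℍ) p).2
def mk (a b : ℍ) : Oct := (WithLp.equiv 2 (ℍ × ℍ)).symm (a, b)

instance : One Oct := ⟨mk 1 0⟩

/-- Cayley–Dickson multiplication. -/
instance : Mul Oct :=
  ⟨fun p q => mk (c1 p * c1 q - star (c2 q) * c2 p) (c2 q * c1 p + c2 p * star (c1 q))⟩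

/-- Octonionic conjugation. -/
instance : Star Oct := ⟨fun p => mk (star (c1 p)) (-(c2 p))⟩

/-- Inverse: `p⁻¹ = ‖p‖⁻² • (star p)` (so `0⁻¹ = 0`). -/
instance : Inv Oct := ⟨fun p => (‖p‖ ^ 2)⁻¹ • star p⟩

/-- The real inner product on `𝕆 ≅ ℝ⁸`, via polarization. -/
def oinner (p q : Oct) : ℝ := (1 / 4) * (‖p + q‖ ^ 2 - ‖p - q‖ ^ 2)

/-- The sphere `𝕊` of imaginary units of the octonions. -/
def Sph : Set Oct := {I | I * I = -1}

/-- The slice complex plane `ℂ_I = ℝ + ℝ I ⊆ 𝕆`. -/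
def CI (I : Oct) : Set Oct := {z | ∃ s t : ℝ, z = s • (1 : Oct) + t • I}

end Oct

open Oct

/-- The point `x + y I ∈ ℂ_Iⁿ ⊆ 𝕆ⁿ`. -/
def aff {n : ℕ} (x y : Fin n → ℝ) (I : Oct) : Fin n → Oct :=
  fun m => x m • (1 : Oct) + y m • I

/-- The embedding `ℝⁿ ⊆ 𝕆ⁿ`. -/
def ofRealn {n : ℕ} (x : Fin n → ℝ) : Fin n → Oct := fun m => x m • (1 : Oct)

/-- The slice `ℂ_Iⁿ ⊆ 𝕆ⁿ`. -/
def slicen (n : ℕ) (I : Oct) : Set (Fin n → Oct) := {q | ∃ x y : Fin n → ℝ, q = aff x y I}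

/-- The `n`-dimensional quadratic cone `𝕆ₛⁿ = ⋃_{I ∈ 𝕊} ℂ_Iⁿ`. -/
def cone (n : ℕ) : Set (Fin n → Oct) := ⋃ I ∈ Sph, slicen n I

/-- The slice topology `τ_s`: a set is open iff its trace on every slice `ℂ_Iⁿ`
is open (expressed via the canonical parametrizations `(x,y) ↦ x + yI`). -/
def τs (n : ℕ) : TopologicalSpace (Fin n → Oct) :=
  ⨆ I : Sph, TopologicalSpace.coinduced
    (fun p : (Fin n → ℝ) × (Fin n → ℝ) => aff p.1 p.2 I.1) inferInstance

/-- A slice-open subset of the quadratic cone. -/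
def SliceOpen (n : ℕ) (Ω : Set (Fin n → Oct)) : Prop :=
  Ω ⊆ cone n ∧ IsOpen[τs n] Ω

/-- A slice-domain: a nonempty slice-connected slice-open subset of the cone. -/
def SliceDomain (n : ℕ) (Ω : Set (Fin n → Oct)) : Prop :=
  SliceOpen n Ω ∧ @IsConnected _ (τs n) Ω

/-- Real-connectedness: `Ω ∩ ℝⁿ` is a (pre)connected subset of `ℝⁿ`. -/
def RealConnected (n : ℕ) (Ω : Set (Fin n → Oct)) : Prop :=
  IsPreconnected {x : Fin n → ℝ | ofRealn x ∈ Ω}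

/-- Axially symmetric subsets of the cone. -/
def AxSymm (n : ℕ) (Ω : Set (Fin n → Oct)) : Prop :=
  ∀ (x y : Fin n → ℝ), ∀ I ∈ Sph, ∀ J ∈ Sph, aff x y I ∈ Ω → aff x y J ∈ Ω

/-- The upper half-space `ℝ²ⁿ₊`: pairs `(x,y)` with `y = 0` or the first
nonzero coordinate of `y` positive. -/
def pos2n (n : ℕ) : Set ((Fin n → ℝ) × (Fin n → ℝ)) :=
  {p | p.2 = 0 ∨ ∃ m : Fin n, 0 < p.2 m ∧ ∀ k : Fin n, k < m → p.2 k = 0}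

/-- `Ω_{s₁}`. -/
def s1 {n : ℕ} (Ω : Set (Fin n → Oct)) : Set ((Fin n → ℝ) × (Fin n → ℝ)) :=
  {p | ∃ I ∈ Sph, aff p.1 p.2 I ∈ Ω}

/-- `Ω_{s₂}`. -/
def s2 {n : ℕ} (Ω : Set (Fin n → Oct)) : Set ((Fin n → ℝ) × (Fin n → ℝ)) :=
  {p | ∃ J ∈ Sph, ∃ K ∈ Sph, J ≠ K ∧ aff p.1 p.2 J ∈ Ω ∧ aff p.1 p.2 K ∈ Ω}

/-- Slice functions: induced on `Ω_{s₂}⁺` by a pair `(F₁, F₂)` via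
`f(x + yI) = F₁(x,y) + I·F₂(x,y)`. -/
def IsSliceFun (n : ℕ) (Ω : Set (Fin n → Oct)) (f : (Fin n → Oct) → Oct) : Prop :=
  ∃ F₁ F₂ : (Fin n → ℝ) × (Fin n → ℝ) → Oct,
    ∀ x y : Fin n → ℝ, (x, y) ∈ s2 Ω ∩ pos2n n → ∀ I ∈ Sph, aff x y I ∈ Ω →
      f (aff x y I) = F₁ (x, y) + I * F₂ (x, y)

/-- Holomorphy of a function of `n` slice variables, read through the
parametrization `(x,y) ↦ x + yI`: continuous partial derivatives (i.e. `C¹`)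
and the Cauchy–Riemann equations `(∂/∂xₘ + I ∂/∂yₘ) g = 0` on `U`. -/
def Holo (n : ℕ) (I : Oct) (g : (Fin n → ℝ) × (Fin n → ℝ) → Oct)
    (U : Set ((Fin n → ℝ) × (Fin n → ℝ))) : Prop :=
  ContDiffOn ℝ 1 g U ∧
  ∀ p ∈ U, ∀ m : Fin n,
    fderiv ℝ g p (Pi.single m 1, 0) + I * fderiv ℝ g p (0, Pi.single m 1) = 0

/-- Weak slice regularity: each restriction `f|_{Ω ∩ ℂ_Iⁿ}` is holomorphic. -/
def WSliceReg (n : ℕ) (Ω : Set (Fin n → Oct)) (f : (Fin n → Oct) → Oct) : Prop :=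
  ∀ I ∈ Sph, Holo n I (fun p => f (aff p.1 p.2 I)) {p | aff p.1 p.2 I ∈ Ω}

/-- The complex structure `σ(a,b) = (−b,a)` on `𝕆²`. -/
def sigma2 : Oct × Oct → Oct × Oct := fun w => (-w.2, w.1)

/-- Holomorphic stem maps: `F : V → 𝕆²` extends to a `C¹` map `G` on an open
neighborhood `U ⊇ V` satisfying `(∂/∂xₘ + σ ∂/∂yₘ) G = 0` on `U`. -/
def StemHolo (n : ℕ) (V : Set ((Fin n → ℝ) × (Fin n → ℝ)))
    (F : (Fin n → ℝ) × (Fin n → ℝ) → Oct × Oct) : Prop :=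
  ∃ (U : Set ((Fin n → ℝ) × (Fin n → ℝ))) (G : (Fin n → ℝ) × (Fin n → ℝ) → Oct × Oct),
    IsOpen U ∧ V ⊆ U ∧ Set.EqOn G F V ∧ ContDiffOn ℝ 1 G U ∧
    ∀ p ∈ U, ∀ m : Fin n,
      fderiv ℝ G p (Pi.single m 1, 0) + sigma2 (fderiv ℝ G p (0, Pi.single m 1)) = 0

/-- Strong slice regularity: `f` is induced by a holomorphic stem map on `Ω_{s₁}`. -/
def SSliceReg (n : ℕ) (Ω : Set (Fin n → Oct)) (f : (Fin n → Oct) → Oct) : Prop :=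
  ∃ F : (Fin n → ℝ) × (Fin n → ℝ) → Oct × Oct, StemHolo n (s1 Ω) F ∧
    ∀ x y : Fin n → ℝ, ∀ I ∈ Sph, aff x y I ∈ Ω →
      f (aff x y I) = (F (x, y)).1 + I * (F (x, y)).2

/-- An s-basis `{I, J, K}` of the octonions. -/
def IsSBasis (I J K : Oct) : Prop :=
  I ∈ Sph ∧ J ∈ Sph ∧ K ∈ Sph ∧
  LinearIndependent ℝ ![(1 : Oct), I, J, I * J, K, J * K, I * K, (I * J) * K] ∧
  Submodule.span ℝ (Set.range ![(1 : Oct), I, J, I * J, K, J * K, I * K, (I * J) * K]) = ⊤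

/-- Iterated left multiplication `L_w^β = (L_{w₁})^{β₁} ∘ ⋯ ∘ (L_{wₙ})^{βₙ}`. -/
def Lpow {n : ℕ} (w : Fin n → Oct) (β : Fin n → ℕ) : Oct → Oct :=
  fun a => (List.finRange n).foldr (fun ℓ c => (fun o => w ℓ * o)^[β ℓ] c) a

/-- The `*`-power `(q − p)^{*α} a = ∑_{β ≤ α} C(α,β) L_q^β (L_{−p}^{α−β} a)`. -/
def starPow {n : ℕ} (p : Fin n → Oct) (α : Fin n → ℕ) (a : Oct) (q : Fin n → Oct) : Oct :=
  ∑ β ∈ Finset.Iic α, (∏ ℓ, (α ℓ).choose (β ℓ)) • Lpow q β (Lpow (-p) (α - β) a)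

/-- The `ℓ`-th slice derivative `∂_ℓ f (x + w) = (∂/∂x_ℓ) f (x + w)`. -/
def sderiv {n : ℕ} (ℓ : Fin n) (f : (Fin n → Oct) → Oct) : (Fin n → Oct) → Oct :=
  fun q => deriv (fun t : ℝ => f (fun m => q m + (if m = ℓ then t else 0) • (1 : Oct))) 0

/-- The iterated slice derivative `f^{(α)} = (∂₁)^{α₁} ⋯ (∂ₙ)^{αₙ} f`. -/
def sderivMulti {n : ℕ} (α : Fin n → ℕ) (f : (Fin n → Oct) → Oct) : (Fin n → Oct) → Oct :=
  (List.finRange n).foldr (fun ℓ g => (sderiv ℓ)^[α ℓ] g) f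

/-- The slice-polydisc `P̃(q₀, r)` (relative to `I ∈ 𝕊` with `q₀ ∈ ℂ_Iⁿ`):
points `x + yJ` with `x ± yI` in the closed polydisc `P_I(q₀, r)`. -/
def polyDisc {n : ℕ} (q₀ : Fin n → Oct) (I : Oct) (r : Fin n → ℝ) : Set (Fin n → Oct) :=
  {q | ∃ x y : Fin n → ℝ, ∃ J ∈ Sph, q = aff x y J ∧
        (∀ ℓ, ‖aff x y I ℓ - q₀ ℓ‖ ≤ r ℓ) ∧ (∀ ℓ, ‖aff x (-y) I ℓ - q₀ ℓ‖ ≤ r ℓ)}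

-- basic component lemmas
lemma c1_mk (a b : ℍ) : c1 (mk a b) = a := rfl
lemma c2_mk (a b : ℍ) : c2 (mk a b) = b := rfl
lemma c1_smul (s : ℝ) (p : Oct) : c1 (s • p) = s • c1 p := rfl
lemma c2_smul (s : ℝ) (p : Oct) : c2 (s • p) = s • c2 p := rfl
lemma c1_add (p q : Oct) : c1 (p + q) = c1 p + c1 q := rfl
lemma c2_add (p q : Oct) : c2 (p + q) = c2 p + c2 q := rfl
lemma c1_neg (p : Oct) : c1 (-p) = -(c1 p) := rfl
lemma c2_neg (p : Oct) : c2 (-p) = -(c2 p) := rfl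
lemma c1_one : c1 (1 : Oct) = 1 := rfl
lemma c2_one : c2 (1 : Oct) = 0 := rfl
lemma c1_zero : c1 (0 : Oct) = 0 := rfl
lemma c2_zero : c2 (0 : Oct) = 0 := rfl
lemma oct_ext {p q : Oct} (h1 : c1 p = c1 q) (h2 : c2 p = c2 q) : p = q := by
  have : (WithLp.equiv 2 (ℍ × ℍ) p) = (WithLp.equiv 2 (ℍ × ℍ) q) := Prod.ext h1 h2
  exact (WithLp.equiv 2 (ℍ × ℍ)).injective this

lemma mul_c1 (p q : Oct) : c1 (p * q) = c1 p * c1 q - star (c2 q) * c2 p := rfl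
lemma mul_c2 (p q : Oct) : c2 (p * q) = c2 q * c1 p + c2 p * star (c1 q) := rfl

lemma smul_mul_smul_oct (s t : ℝ) (p q : Oct) : (s • p) * (t • q) = (s * t) • (p * q) := by
  apply oct_ext <;>
  · simp only [mul_c1, mul_c2, c1_smul, c2_smul, Quaternion.star_smul, smul_sub, smul_add,
      smul_mul_smul_comm]
    module

lemma one_ne_zero_oct : (1 : Oct) ≠ 0 := by
  intro h
  have : c1 (1 : Oct) = c1 (0 : Oct) := by rw [h]
  simp [c1_one, c1_zero] at this

lemma sph_ne_zero {I : Oct} (hI : I ∈ Sph) : I ≠ 0 := by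
  intro h
  have h2 : I * I = -1 := hI
  rw [h] at h2
  have : c1 ((0 : Oct) * 0) = c1 (-1 : Oct) := by rw [h2]
  simp only [mul_c1, c1_neg, c1_one, c1_zero, c2_zero, mul_zero, star_zero, zero_mul,
    sub_zero] at this
  norm_num at this

def oRe (p : Oct) : ℝ := (c1 p).re

lemma oRe_smul (s : ℝ) (p : Oct) : oRe (s • p) = s * oRe p := by
  simp [oRe, c1_smul]
lemma oRe_add (p q : Oct) : oRe (p + q) = oRe p + oRe q := by simp [oRe, c1_add]
lemma oRe_one : oRe (1 : Oct) = 1 := by simp [oRe, c1_one]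

lemma quat_sq_neg_one_re {a : ℍ} (h : a * a = -1) : a.re = 0 := by
  by_contra hr
  have h1 : (a*a).imI = (-1 : ℍ).imI := by rw [h]
  have h2 : (a*a).imJ = (-1 : ℍ).imJ := by rw [h]
  have h3 : (a*a).imK = (-1 : ℍ).imK := by rw [h]
  have h0 : (a*a).re = (-1 : ℍ).re := by rw [h]
  simp [Quaternion.re_mul, Quaternion.imI_mul, Quaternion.imJ_mul, Quaternion.imK_mul] at h0 h1 h2 h3
  have h2r : (2 * a.re) ≠ 0 := by intro h'; exact hr (by linarith)
  have hi : a.imI = 0 := by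
    have : (2 * a.re) * a.imI = 0 := by ring_nf; ring_nf at h1; linarith
    exact (mul_eq_zero.1 this).resolve_left h2r
  have hj : a.imJ = 0 := by
    have : (2 * a.re) * a.imJ = 0 := by ring_nf; ring_nf at h2; linarith
    exact (mul_eq_zero.1 this).resolve_left h2r
  have hk : a.imK = 0 := by
    have : (2 * a.re) * a.imK = 0 := by ring_nf; ring_nf at h3; linarith
    exact (mul_eq_zero.1 this).resolve_left h2r
  rw [hi, hj, hk] at h0
  nlinarith [sq_nonneg a.re]

lemma sph_re_zero {I : Oct} (hI : I ∈ Sph) : oRe I = 0 := by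
  have h : I * I = -1 := hI
  set a := c1 I with ha
  set b := c2 I with hb
  have hc1 : a * a - star b * b = -1 := by
    have := congrArg c1 h
    simpa [mul_c1, c1_neg, c1_one] using this
  have hc2 : b * a + b * star a = 0 := by
    have := congrArg c2 h
    simpa [mul_c2, c2_neg, c2_one] using this
  by_cases hb0 : b = 0
  · rw [hb0] at hc1
    simp only [star_zero, zero_mul, mul_zero, sub_zero] at hc1
    exact quat_sq_neg_one_re hc1
  · have : b * (a + star a) = 0 := by rw [mul_add]; exact hc2
    rw [Quaternion.self_add_star] at this
    rcases mul_eq_zero.1 this with h' | h'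
    · exact absurd h' hb0
    · have : ((2 * a.re : ℝ) : ℍ) = 0 := by
        push_cast; exact h'
      have : (2 * a.re : ℝ) = 0 := Quaternion.coe_injective (by simpa using this)
      have : a.re = 0 := by linarith
      exact this

-- an explicit imaginary unit
def I₀ : Oct := mk (⟨0,1,0,0⟩ : ℍ) 0

lemma c1_I₀ : c1 I₀ = (⟨0,1,0,0⟩ : ℍ) := rfl
lemma c2_I₀ : c2 I₀ = 0 := rfl

lemma I₀_mem_Sph : I₀ ∈ Sph := by
  have ha : (⟨0,1,0,0⟩ : ℍ) * (⟨0,1,0,0⟩ : ℍ) = -1 := by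
    ext <;> simp [Quaternion.re_mul, Quaternion.imI_mul, Quaternion.imJ_mul, Quaternion.imK_mul]
  show I₀ * I₀ = -1
  apply oct_ext
  · rw [mul_c1, c1_I₀, c2_I₀]
    have h1 : c1 (-1 : Oct) = -(1:ℍ) := by rw [show (-1:Oct) = -(1:Oct) from rfl, c1_neg, c1_one]
    rw [h1]
    simp only [star_zero, mul_zero, sub_zero]; exact ha
  · rw [mul_c2, c1_I₀, c2_I₀]
    have h2 : c2 (-1 : Oct) = 0 := by
      rw [show (-1:Oct) = -(1:Oct) from rfl, c2_neg, c2_one, neg_zero]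
    rw [h2]
    exact (congrArg₂ (· + ·) (zero_mul (M₀ := ℍ) _) (zero_mul (M₀ := ℍ) _)).trans (add_zero (0 : ℍ))

-- extraction
lemma aff_extract {n : ℕ} {x y x' y' : Fin n → ℝ} {I J : Oct} (hI : I ∈ Sph) (hJ : J ∈ Sph)
    (h : aff x y I = aff x' y' J) : x = x' ∧ ∀ m, y m • I = y' m • J := by
  have key : ∀ m, x m = x' m ∧ y m • I = y' m • J := by
    intro m
    have hm : x m • (1:Oct) + y m • I = x' m • (1:Oct) + y' m • J := congrFun h m
    have hre : x m = x' m := by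
      have := congrArg oRe hm
      simp only [oRe_add, oRe_smul, oRe_one, sph_re_zero hI, sph_re_zero hJ, mul_one,
        mul_zero, add_zero] at this
      exact this
    refine ⟨hre, ?_⟩
    rw [hre] at hm
    exact add_left_cancel hm
  exact ⟨funext fun m => (key m).1, fun m => (key m).2⟩

lemma smul_sph {I : Oct} (hI : I ∈ Sph) {c : ℝ} (hc : c • I ∈ Sph) : c = 1 ∨ c = -1 := by
  have h1 : (c • I) * (c • I) = -1 := hc
  rw [smul_mul_smul_oct] at h1
  have h2 : (c * c) • (I * I) = (1:ℝ) • (-1 : Oct) := by rw [h1, one_smul]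
  rw [hI] at h2
  have h3 : (c * c) • (-1 : Oct) = (1:ℝ) • (-1 : Oct) := h2
  have hne : (-1 : Oct) ≠ 0 := by
    intro h; exact one_ne_zero_oct (by rw [← neg_neg (1:Oct), h, neg_zero])
  have : c * c = 1 := smul_left_injective ℝ hne h3
  have h4 : (c - 1) * (c + 1) = 0 := by ring_nf; linarith
  rcases mul_eq_zero.1 h4 with h' | h'
  · left; linarith
  · right; linarith

/-- If a nonreal point has two representations, the units are proportional by ±1. -/
lemma rep_transfer {n : ℕ} {x y x' y' : Fin n → ℝ} {I J : Oct} (hI : I ∈ Sph) (hJ : J ∈ Sph)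
    (h : aff x y I = aff x' y' J) (hy : y' ≠ 0) :
    x = x' ∧ ∃ c : ℝ, (c = 1 ∨ c = -1) ∧ I = c • J ∧ y = c • y' := by
  obtain ⟨hx, hyI⟩ := aff_extract hI hJ h
  refine ⟨hx, ?_⟩
  obtain ⟨m, hm⟩ : ∃ m, y' m ≠ 0 := by
    by_contra hcon
    push_neg at hcon
    exact hy (funext hcon)
  have hJne : J ≠ 0 := sph_ne_zero hJ
  have hym : y m ≠ 0 := by
    intro h0
    have := hyI m
    rw [h0, zero_smul] at this
    rcases (smul_eq_zero.1 this.symm) with h' | h'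
    · exact hm h'
    · exact hJne h'
  set c : ℝ := y' m / y m with hc
  have hIc : I = c • J := by
    have := hyI m
    have : (y m)⁻¹ • (y m • I) = (y m)⁻¹ • (y' m • J) := by rw [this]
    rw [smul_smul, smul_smul, inv_mul_cancel₀ hym, one_smul] at this
    rw [hc, div_eq_inv_mul]
    exact this
  have hcs : c = 1 ∨ c = -1 := smul_sph hJ (hIc ▸ hI)
  refine ⟨c, hcs, hIc, ?_⟩
  funext k
  have hk := hyI k
  rw [hIc, smul_smul] at hk
  have : y k * c = y' k := smul_left_injective ℝ hJne hk
  have hcc : c * c = 1 := by rcases hcs with h|h <;> rw [h] <;> ring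
  show y k = c * y' k
  rw [← this]
  calc y k = y k * (c * c) := by rw [hcc, mul_one]
  _ = c * (y k * c) := by ring

lemma aff_zero {n : ℕ} (x : Fin n → ℝ) (I : Oct) : aff x 0 I = ofRealn x := by
  funext m; simp [aff, ofRealn]

lemma aff_smul_unit {n : ℕ} (x y : Fin n → ℝ) (c : ℝ) (J : Oct) :
    aff x y (c • J) = aff x (c • y) J := by
  funext m; simp [aff, smul_smul, mul_comm]

-- auxiliary definitions for the proof
def pre {n : ℕ} (Ω : Set (Fin n → Oct)) (I : Oct) : Set ((Fin n → ℝ) × (Fin n → ℝ)) :=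
  {p | aff p.1 p.2 I ∈ Ω}

lemma pre_open {n : ℕ} {Ω : Set (Fin n → Oct)} (hΩ : IsOpen[τs n] Ω) {I : Oct} (hI : I ∈ Sph) :
    IsOpen (pre Ω I) := by
  have h : ∀ J : Sph, IsOpen[TopologicalSpace.coinduced
      (fun p : (Fin n → ℝ) × (Fin n → ℝ) => aff p.1 p.2 J.1) inferInstance] Ω :=
    isOpen_iSup_iff.1 hΩ
  exact isOpen_coinduced.1 (h ⟨I, hI⟩)

def Agood {n : ℕ} (Ω : Set (Fin n → Oct)) : Set (Fin n → Oct) :=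
  {q | ∃ I ∈ Sph, ∃ x y : Fin n → ℝ, q = aff x y I ∧
    ∃ x'' : Fin n → ℝ, JoinedIn (pre Ω I) (x, y) (x'', 0)}

def Vbad {n : ℕ} (Ω : Set (Fin n → Oct)) : Set (Fin n → Oct) :=
  {q | ∃ J ∈ Sph, ∃ x y : Fin n → ℝ, q = aff x y J ∧ aff x y J ∈ Ω ∧ q ∉ Agood Ω}

/-- Core step: a path witness on some slice can be transported to any given slice
representation of the same point. -/
lemma path_from_rep {n : ℕ} {Ω : Set (Fin n → Oct)} {J : Oct} {x y : Fin n → ℝ}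
    (hJ : J ∈ Sph) (hq : aff x y J ∈ Agood Ω) :
    ∃ x'' : Fin n → ℝ, JoinedIn (pre Ω J) (x, y) (x'', 0) := by
  obtain ⟨I, hI, x₀, y₀, hrep, x'', hjoin⟩ := hq
  by_cases hy : y = 0
  · subst hy
    refine ⟨x, JoinedIn.refl ?_⟩
    show aff x 0 J ∈ Ω
    have hqΩ : aff x₀ y₀ I ∈ Ω := hjoin.source_mem
    rw [← hrep] at hqΩ
    exact hqΩ
  · obtain ⟨hx, c, hcs, hIc, hy₀⟩ := rep_transfer hI hJ hrep.symm hy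
    have hcc : c * c = 1 := by rcases hcs with h | h <;> rw [h] <;> ring
    have hcont : Continuous (fun p : (Fin n → ℝ) × (Fin n → ℝ) => (p.1, c • p.2)) := by
      fun_prop
    have hsub : (fun p : (Fin n → ℝ) × (Fin n → ℝ) => (p.1, c • p.2)) '' (pre Ω I) ⊆ pre Ω J := by
      rintro _ ⟨p, hp, rfl⟩
      show aff p.1 (c • p.2) J ∈ Ω
      rw [← aff_smul_unit, ← hIc]
      exact hp
    have hjj := (hjoin.map hcont).mono hsub
    have he1 : ((x₀, c • y₀) : (Fin n → ℝ) × (Fin n → ℝ)) = (x, y) := by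
      rw [hx, hy₀, smul_smul, hcc, one_smul]
    have he2 : ((x'', c • (0 : Fin n → ℝ)) : (Fin n → ℝ) × (Fin n → ℝ)) = (x'', 0) := by
      rw [smul_zero]
    rw [he1, he2] at hjj
    exact ⟨x'', hjj⟩

lemma Agood_open {n : ℕ} {Ω : Set (Fin n → Oct)} (hΩ : IsOpen[τs n] Ω) :
    IsOpen[τs n] (Agood Ω) := by
  show IsOpen[⨆ I : Sph, TopologicalSpace.coinduced
    (fun p : (Fin n → ℝ) × (Fin n → ℝ) => aff p.1 p.2 I.1) inferInstance] (Agood Ω)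
  rw [isOpen_iSup_iff]
  rintro ⟨J, hJ⟩
  rw [isOpen_coinduced]
  rw [Metric.isOpen_iff]
  rintro ⟨x, y⟩ hxy
  have hq : aff x y J ∈ Agood Ω := hxy
  obtain ⟨x'', hjoin⟩ := path_from_rep hJ hq
  have hpre : ((x, y) : (Fin n → ℝ) × (Fin n → ℝ)) ∈ pre Ω J := hjoin.source_mem
  obtain ⟨ε, hε, hball⟩ := Metric.isOpen_iff.1 (pre_open hΩ hJ) (x, y) hpre
  refine ⟨ε, hε, ?_⟩
  rintro ⟨x', y'⟩ hx'y'
  show aff x' y' J ∈ Agood Ω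
  have hconv : Convex ℝ (Metric.ball ((x, y) : (Fin n → ℝ) × (Fin n → ℝ)) ε) := convex_ball _ _
  have hpc := hconv.isPathConnected ⟨(x, y), Metric.mem_ball_self hε⟩
  have hseg : JoinedIn (pre Ω J) (x', y') (x, y) :=
    (hpc.joinedIn _ hx'y' _ (Metric.mem_ball_self hε)).mono hball
  exact ⟨J, hJ, x', y', rfl, x'', hseg.trans hjoin⟩

lemma Vbad_open {n : ℕ} {Ω : Set (Fin n → Oct)} (hΩ : IsOpen[τs n] Ω) :
    IsOpen[τs n] (Vbad Ω) := by
  show IsOpen[⨆ I : Sph, TopologicalSpace.coinduced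
    (fun p : (Fin n → ℝ) × (Fin n → ℝ) => aff p.1 p.2 I.1) inferInstance] (Vbad Ω)
  rw [isOpen_iSup_iff]
  rintro ⟨J, hJ⟩
  rw [isOpen_coinduced]
  rw [Metric.isOpen_iff]
  rintro ⟨x, y⟩ hxy
  have hxy' : aff x y J ∈ Vbad Ω := hxy
  obtain ⟨I, hI, x₀, y₀, hrep, hΩmem, hnA⟩ := hxy'
  have hqΩ : aff x y J ∈ Ω := by rw [hrep]; exact hΩmem
  obtain ⟨ε, hε, hball⟩ := Metric.isOpen_iff.1 (pre_open hΩ hJ) (x, y) hqΩ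
  refine ⟨ε, hε, ?_⟩
  rintro ⟨x', y'⟩ hx'y'
  show aff x' y' J ∈ Vbad Ω
  have hq'Ω : aff x' y' J ∈ Ω := hball hx'y'
  refine ⟨J, hJ, x', y', rfl, hq'Ω, ?_⟩
  intro hq'A
  apply hnA
  obtain ⟨x'', hjoin⟩ := path_from_rep hJ hq'A
  have hconv : Convex ℝ (Metric.ball ((x, y) : (Fin n → ℝ) × (Fin n → ℝ)) ε) := convex_ball _ _
  have hpc := hconv.isPathConnected ⟨(x, y), Metric.mem_ball_self hε⟩
  have hseg : JoinedIn (pre Ω J) (x, y) (x', y') :=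
    (hpc.joinedIn _ (Metric.mem_ball_self hε) _ hx'y').mono hball
  exact ⟨J, hJ, x, y, rfl, x'', hseg.trans hjoin⟩


/-- In a real-connected slice-domain meeting `ℝⁿ`, every point
is joined to every real point of the domain by a continuous path lying on a
single slice `ℂ_Iⁿ`. -/
theorem joined_to_real_point_on_a_slice (n : ℕ) (hn : 1 ≤ n)
    (Ω : Set (Fin n → Oct)) (hΩ : SliceDomain n Ω) (hrc : RealConnected n Ω)
    (hR : {x : Fin n → ℝ | ofRealn x ∈ Ω}.Nonempty) :
    ∀ q ∈ Ω, ∀ x : Fin n → ℝ, ofRealn x ∈ Ω →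
      ∃ I ∈ Sph, ∃ γ : unitInterval → (Fin n → ℝ) × (Fin n → ℝ),
        Continuous γ ∧ (∀ t, aff (γ t).1 (γ t).2 I ∈ Ω) ∧
        aff (γ 0).1 (γ 0).2 I = q ∧ aff (γ 1).1 (γ 1).2 I = ofRealn x := by
  obtain ⟨⟨hcone, hopen⟩, hconn⟩ := hΩ
  -- Ω ⊆ Agood Ω
  have hmain : Ω ⊆ Agood Ω := by
    intro q hq
    by_contra hqA
    -- Ω meets Vbad
    have hqV : q ∈ Vbad Ω := by
      obtain ⟨I, hI, hsl⟩ := Set.mem_iUnion₂.1 (hcone hq)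
      obtain ⟨x, y, hxy⟩ := hsl
      exact ⟨I, hI, x, y, hxy, hxy ▸ hq, hqA⟩
    -- Ω meets Agood
    obtain ⟨x₀, hx₀⟩ := hR
    have hAne : (Ω ∩ Agood Ω).Nonempty := by
      refine ⟨ofRealn x₀, hx₀, I₀, I₀_mem_Sph, x₀, 0, (aff_zero x₀ I₀).symm, x₀, JoinedIn.refl ?_⟩
      show aff x₀ 0 I₀ ∈ Ω
      rw [aff_zero]; exact hx₀
    have hVne : (Ω ∩ Vbad Ω).Nonempty := ⟨q, hq, hqV⟩
    have hcover : Ω ⊆ Agood Ω ∪ Vbad Ω := by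
      intro q' hq'
      by_cases h : q' ∈ Agood Ω
      · exact Or.inl h
      · obtain ⟨I, hI, hsl⟩ := Set.mem_iUnion₂.1 (hcone hq')
        obtain ⟨x, y, hxy⟩ := hsl
        exact Or.inr ⟨I, hI, x, y, hxy, hxy ▸ hq', h⟩
    obtain ⟨q', _, hq'A, hq'V⟩ :=
      hconn.2 (Agood Ω) (Vbad Ω) (Agood_open hopen) (Vbad_open hopen) hcover hAne hVne
    obtain ⟨_, _, _, _, _, _, hnot⟩ := hq'V
    exact hnot hq'A
  intro q hq x hx
  obtain ⟨I, hI, x₀, y₀, hrep, x'', hjoin⟩ := hmain hq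
  -- join x'' to x inside the real trace
  have hRopen : IsOpen {z : Fin n → ℝ | ofRealn z ∈ Ω} := by
    have : {z : Fin n → ℝ | ofRealn z ∈ Ω} =
        (fun z : Fin n → ℝ => ((z, (0 : Fin n → ℝ)) : (Fin n → ℝ) × (Fin n → ℝ))) ⁻¹' pre Ω I := by
      ext z
      show ofRealn z ∈ Ω ↔ aff z 0 I ∈ Ω
      rw [aff_zero]
    rw [this]
    exact (pre_open hopen hI).preimage (by fun_prop)
  have hx''R : x'' ∈ {z : Fin n → ℝ | ofRealn z ∈ Ω} := by
    have := hjoin.target_mem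
    show ofRealn x'' ∈ Ω
    rw [← aff_zero x'' I]
    exact this
  have hconnR : IsConnected {z : Fin n → ℝ | ofRealn z ∈ Ω} := ⟨⟨x, hx⟩, hrc⟩
  have hpcR : IsPathConnected {z : Fin n → ℝ | ofRealn z ∈ Ω} :=
    hRopen.isConnected_iff_isPathConnected.1 hconnR
  have hjR : JoinedIn {z : Fin n → ℝ | ofRealn z ∈ Ω} x'' x := hpcR.joinedIn _ hx''R _ hx
  have hmapR : JoinedIn (pre Ω I) ((x'', 0) : (Fin n → ℝ) × (Fin n → ℝ)) (x, 0) := by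
    have hcont : Continuous (fun z : Fin n → ℝ =>
        ((z, (0 : Fin n → ℝ)) : (Fin n → ℝ) × (Fin n → ℝ))) := by fun_prop
    refine (hjR.map hcont).mono ?_
    rintro _ ⟨z, hz, rfl⟩
    show aff z 0 I ∈ Ω
    rw [aff_zero]
    exact hz
  obtain ⟨γ, hγ⟩ := hjoin.trans hmapR
  refine ⟨I, hI, fun t => γ t, γ.continuous, hγ, ?_, ?_⟩
  · show aff (γ 0).1 (γ 0).2 I = q
    rw [γ.source]
    exact hrep.symm
  · show aff (γ 1).1 (γ 1).2 I = ofRealn x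
    rw [γ.target]
    exact aff_zero x I

end
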